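/- arXiv:1406.7346 — 5 statements merged into one kernel-verified Lean document; each statement's English description precedes it below -/
import Mathlib

section
/- Let A = {a_0 < a_1 < a_2} be a set of 3 integers, r = (r_0, 1, r_2) with r_0, r_2 positive integers, and h an integer with 2 ≤ h ≤ r_0 + 1 + r_2 − 2. Then |h^{(r)}A| = L(r,h) (regardless of whether A is an arithmetic progression). -/
open Finset

/-- A step `U → W`: some coordinate `j` decreases by 1 and coordinate `j+1` increases by 1. -/
def IsStep (k : ℕ) (U W : ℕ → ℕ) : Prop :=
  ∃ j, j + 1 < k ∧ U j = W j + 1 ∧ W (j + 1) = U (j + 1) + 1 ∧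
    ∀ i, i ≠ j → i ≠ j + 1 → W i = U i

/-- Membership in `R(r,h)`: a `k`-tuple of nonnegative integers with `x i ≤ r i` and `∑ x i = h`. -/
def InR (k : ℕ) (r : ℕ → ℕ) (h : ℕ) (x : ℕ → ℕ) : Prop :=
  (∀ i < k, x i ≤ r i) ∧ (∀ i, k ≤ i → x i = 0) ∧ ∑ i ∈ Finset.range k, x i = h

/-- The general `h`-fold sumset `h^{(r)}A` for `A = {a 0 < a 1 < ⋯ < a (k-1)}`. -/
def genSumset (k : ℕ) (a : ℕ → ℤ) (r : ℕ → ℕ) (h : ℕ) : Set ℤ :=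
  {z | ∃ s : ℕ → ℕ, (∀ i < k, s i ≤ r i) ∧ (∑ i ∈ Finset.range k, s i = h) ∧
    z = ∑ i ∈ Finset.range k, (s i : ℤ) * a i}

/-- The quantity `L(r,h)` in terms of `I`, `M`, `δ`, `θ`. -/
def Lval (k I M : ℕ) (r : ℕ → ℕ) (δ θ : ℕ) : ℤ :=
  (∑ j ∈ Finset.Ico (M + 1) k, (j : ℤ) * r j) - (∑ j ∈ Finset.range I, (j : ℤ) * r j)
    + (M : ℤ) * θ - (I : ℤ) * δ + 1

/-- The weighted sum `S(X) = ∑ j·x j`. -/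
def Sw (k : ℕ) (x : ℕ → ℕ) : ℤ := ∑ j ∈ Finset.range k, (j : ℤ) * x j

/-- An `(r,h)`-path of length `t`: `P 1 → P 2 → ⋯ → P t`, all in `R(r,h)`. -/
def IsPath (k : ℕ) (r : ℕ → ℕ) (h t : ℕ) (P : ℕ → ℕ → ℕ) : Prop :=
  (∀ i, 1 ≤ i → i ≤ t → InR k r h (P i)) ∧
  (∀ i, 1 ≤ i → i < t → IsStep k (P i) (P (i + 1)))

set_option maxHeartbeats 2000000 in
theorem three_elt_r1_eq_one (h I M δ θ : ℕ) (a₀ a₁ a₂ : ℤ) (r₀ r₂ : ℕ)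
    (ha01 : a₀ < a₁) (ha12 : a₁ < a₂)
    (hr0 : 0 < r₀) (hr2 : 0 < r₂)
    (hh2 : 2 ≤ h) (hhk : h + 2 ≤ r₀ + 1 + r₂)
    (r : ℕ → ℕ) (hrdef : r = fun j => if j = 0 then r₀ else if j = 1 then 1 else r₂)
    (a : ℕ → ℤ) (hadef : a = fun j => if j = 0 then a₀ else if j = 1 then a₁ else a₂)
    (hIk : I ≤ 3)
    (hI1 : ∑ j ∈ Finset.range I, r j ≤ h)
    (hI2 : ∀ I' ≤ 3, (∑ j ∈ Finset.range I', r j ≤ h) → I' ≤ I)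
    (hM1 : ∑ j ∈ Finset.Ico (M + 1) 3, r j ≤ h)
    (hM2 : ∀ M', (∑ j ∈ Finset.Ico (M' + 1) 3, r j ≤ h) → M ≤ M')
    (hδ : (δ : ℤ) = (h : ℤ) - ∑ j ∈ Finset.range I, (r j : ℤ))
    (hθ : (θ : ℤ) = (h : ℤ) - ∑ j ∈ Finset.Ico (M + 1) 3, (r j : ℤ)) :
    ((genSumset 3 a r h).ncard : ℤ) = Lval 3 I M r δ θ := by
  subst hrdef hadef
  have hd0 : (0:ℤ) < a₁ - a₀ := by linarith
  have hde : a₁ - a₀ < a₂ - a₀ := by linarith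
  have he0 : (0:ℤ) < a₂ - a₀ := by linarith
  set A0 : Finset ℤ :=
    (Finset.Icc (h - r₀) (min r₂ h)).image (fun v : ℕ => (h : ℤ) * a₀ + v * (a₂ - a₀)) with hA0
  set A1 : Finset ℤ :=
    (Finset.Icc (h - 1 - r₀) (min r₂ (h-1))).image
      (fun v : ℕ => (h : ℤ) * a₀ + (a₁ - a₀) + v * (a₂ - a₀)) with hA1
  -- Step 1: the sumset equals A0 ∪ A1
  have hset : genSumset 3 (fun j => if j = 0 then a₀ else if j = 1 then a₁ else a₂)
      (fun j => if j = 0 then r₀ else if j = 1 then 1 else r₂) h = ↑(A0 ∪ A1) := by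
    ext z
    simp only [genSumset, Set.mem_setOf_eq, Finset.coe_union, Set.mem_union, Finset.coe_image,
      Set.mem_image, Finset.mem_coe, Finset.mem_Icc,
      Finset.sum_range_succ, Finset.sum_range_zero, hA0, hA1]
    constructor
    · rintro ⟨s, hs, hsum, rfl⟩
      have h0 : s 0 ≤ r₀ := by simpa using hs 0 (by norm_num)
      have h1 : s 1 ≤ 1 := by simpa using hs 1 (by norm_num)
      have h2 : s 2 ≤ r₂ := by simpa using hs 2 (by norm_num)
      interval_cases hs1 : s 1
      · left
        refine ⟨s 2, ⟨by omega, by omega⟩, ?_⟩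
        have : (s 0 : ℤ) = (h : ℤ) - s 2 := by push_cast; omega
        rw [this]; push_cast; ring
      · right
        refine ⟨s 2, ⟨by omega, by omega⟩, ?_⟩
        have : (s 0 : ℤ) = (h : ℤ) - 1 - s 2 := by push_cast; omega
        rw [this]; push_cast; ring
    · rintro (⟨v, ⟨hv1, hv2⟩, rfl⟩ | ⟨v, ⟨hv1, hv2⟩, rfl⟩)
      · refine ⟨fun i => if i = 0 then h - v else if i = 2 then v else 0, ?_, ?_, ?_⟩
        · intro i hi; interval_cases i <;> simp <;> omega
        · simp; omega
        · have : ((h - v : ℕ) : ℤ) = (h : ℤ) - v := by push_cast; omega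
          norm_num
          rw [this]; ring
      · refine ⟨fun i => if i = 0 then h - 1 - v else if i = 2 then v else 1, ?_, ?_, ?_⟩
        · intro i hi; interval_cases i <;> simp <;> omega
        · simp; omega
        · have : ((h - 1 - v : ℕ) : ℤ) = (h : ℤ) - 1 - v := by push_cast; omega
          norm_num
          rw [this]; ring
  rw [hset, Set.ncard_coe_finset]
  -- Step 2: cardinality of the union
  have hinj0 : Function.Injective (fun v : ℕ => (h : ℤ) * a₀ + v * (a₂ - a₀)) := by
    intro v w hvw
    simp only [add_right_inj] at hvw
    have := mul_right_cancel₀ (ne_of_gt he0) hvw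
    exact_mod_cast this
  have hinj1 : Function.Injective (fun v : ℕ => (h : ℤ) * a₀ + (a₁ - a₀) + v * (a₂ - a₀)) := by
    intro v w hvw
    simp only [add_right_inj] at hvw
    have := mul_right_cancel₀ (ne_of_gt he0) hvw
    exact_mod_cast this
  have hdisj : Disjoint A0 A1 := by
    rw [Finset.disjoint_left]
    rintro x hx hx'
    simp only [hA0, hA1, Finset.mem_image, Finset.mem_Icc] at hx hx'
    obtain ⟨v, _, hv⟩ := hx
    obtain ⟨w, _, hw⟩ := hx'
    rw [← hw] at hv
    have key : ((v : ℤ) - w) * (a₂ - a₀) = a₁ - a₀ := by linarith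
    rcases lt_trichotomy (v : ℤ) (w : ℤ) with hc | hc | hc
    · nlinarith
    · rw [hc] at key; simp at key; omega
    · have h1 : (1:ℤ) ≤ (v:ℤ) - w := by omega
      nlinarith
  have hcard : (A0 ∪ A1).card =
      (min r₂ h + 1 - (h - r₀)) + (min r₂ (h-1) + 1 - (h - 1 - r₀)) := by
    rw [Finset.card_union_of_disjoint hdisj, hA0, hA1,
      Finset.card_image_of_injective _ hinj0, Finset.card_image_of_injective _ hinj1,
      Nat.card_Icc, Nat.card_Icc]
  rw [hcard]
  -- Step 3: arithmetic; pin down I and M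
  have sum3 : ∑ j ∈ Finset.range 3,
      (fun j => if j = 0 then r₀ else if j = 1 then 1 else r₂) j = r₀ + 1 + r₂ := by
    simp [Finset.sum_range_succ]
  have hIle : I ≤ 2 := by
    by_contra hc
    have : I = 3 := by omega
    rw [this] at hI1; rw [sum3] at hI1; omega
  have hMle : M ≤ 2 := hM2 2 (by simp)
  have eIco1 : (∑ j ∈ Finset.Ico 1 3,
      (if j = 0 then r₀ else if j = 1 then 1 else r₂)) = 1 + r₂ := by
    simp [Finset.sum_Ico_eq_sum_range, Finset.sum_range_succ]
  have eIco2 : (∑ j ∈ Finset.Ico 2 3,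
      (if j = 0 then r₀ else if j = 1 then 1 else r₂)) = r₂ := by
    simp [Finset.sum_Ico_eq_sum_range, Finset.sum_range_succ]
  have hIfacts : (I = 0 → h < r₀) ∧ (I = 1 → h = r₀) ∧ (I = 2 → r₀ + 1 ≤ h) := by
    refine ⟨?_, ?_, ?_⟩
    · intro hI
      by_contra hc
      have := hI2 1 (by norm_num) (by simp [Finset.sum_range_succ]; omega)
      omega
    · intro hI
      have h1 : r₀ ≤ h := by rw [hI] at hI1; simpa [Finset.sum_range_succ] using hI1
      by_contra hc
      have := hI2 2 (by norm_num) (by simp [Finset.sum_range_succ]; omega)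
      omega
    · intro hI
      rw [hI] at hI1; simp [Finset.sum_range_succ] at hI1; omega
  have hMfacts : (M = 0 → r₂ + 1 ≤ h) ∧ (M = 1 → h = r₂) ∧ (M = 2 → h < r₂) := by
    refine ⟨?_, ?_, ?_⟩
    · intro hM
      rw [hM] at hM1; norm_num at hM1; omega
    · intro hM
      rw [hM] at hM1; norm_num at hM1
      by_contra hc
      have := hM2 0 (by norm_num; omega)
      omega
    · intro hM
      by_contra hc
      have := hM2 1 (by norm_num; omega)
      omega
  obtain ⟨f0, f1, f2⟩ := hIfacts
  obtain ⟨g0, g1, g2⟩ := hMfacts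
  -- the two key linear identities
  have HI : (∑ j ∈ Finset.range I,
        (j : ℤ) * (fun j => if j = 0 then r₀ else if j = 1 then 1 else r₂) j) + (I : ℤ) * δ
      = ((h - r₀ : ℕ) : ℤ) + ((h - 1 - r₀ : ℕ) : ℤ) := by
    have : I = 0 ∨ I = 1 ∨ I = 2 := by omega
    rcases this with hI | hI | hI <;> subst hI <;>
      simp only [Finset.sum_range_succ, Finset.sum_range_zero] at hδ ⊢ <;>
      norm_num at hδ ⊢ <;> omega
  have HM : (∑ j ∈ Finset.Ico (M + 1) 3,
        (j : ℤ) * (fun j => if j = 0 then r₀ else if j = 1 then 1 else r₂) j) + (M : ℤ) * θ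
      = ((min r₂ h : ℕ) : ℤ) + ((min r₂ (h - 1) : ℕ) : ℤ) + 1 := by
    have : M = 0 ∨ M = 1 ∨ M = 2 := by omega
    rcases this with hM | hM | hM <;> subst hM <;>
      simp only [Finset.sum_Ico_eq_sum_range, Finset.sum_range_succ,
        Finset.sum_range_zero] at hθ ⊢ <;>
      norm_num at hθ ⊢ <;> omega
  have key : ((((min r₂ h + 1 - (h - r₀)) + (min r₂ (h-1) + 1 - (h - 1 - r₀))) : ℕ) : ℤ)
      = ((min r₂ h : ℕ) : ℤ) + ((min r₂ (h-1) : ℕ) : ℤ) + 2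
        - ((h - r₀ : ℕ) : ℤ) - ((h - 1 - r₀ : ℕ) : ℤ) := by
    omega
  rw [key]
  simp only [Lval]
  linarith [HI, HM]
end

section
/- Let A = {a_0 < a_1 < a_2} be a set of 3 integers, r = (r_0, r_1, r_2) positive integers with r_1 ≥ 2, and h an integer with 2 ≤ h ≤ r_0 + r_1 + r_2 − 2. Then |h^{(r)}A| = L(r,h) if and only if a_1 − a_0 = a_2 − a_1. -/
open Finset

lemma chain_card' {g : ℕ → ℤ} {n : ℕ} {S : Finset ℤ}
    (hmem : ∀ i ≤ n, g i ∈ S) (hmono : ∀ i, i < n → g i < g (i+1)) :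
    n + 1 ≤ S.card := by
  have key : ∀ j, j ≤ n → ∀ i, i < j → g i < g j := by
    intro j
    induction j with
    | zero => intro _ i hi; omega
    | succ k ih =>
      intro hk i hi
      rcases Nat.lt_succ_iff_lt_or_eq.mp hi with h | h
      · exact (ih (by omega) i h).trans (hmono k (by omega))
      · subst h; exact hmono i (by omega)
  have hinj : Set.InjOn g ↑(range (n+1)) := by
    intro i hi j hj hij
    simp only [coe_range, Set.mem_Iio] at hi hj
    by_contra hne
    rcases Nat.lt_or_ge i j with hlt | hge
    · exact absurd hij (ne_of_lt (key j (by omega) i hlt))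
    · have hlt : j < i := by omega
      exact absurd hij.symm (ne_of_lt (key i (by omega) j hlt))
  have h1 : ((range (n+1)).image g).card = n + 1 := by
    rw [Finset.card_image_of_injOn hinj, card_range]
  have h2 : (range (n+1)).image g ⊆ S := by
    intro z hz
    simp only [mem_image, mem_range] at hz
    obtain ⟨i, hi, rfl⟩ := hz
    exact hmem i (by omega)
  calc n + 1 = _ := h1.symm
    _ ≤ S.card := Finset.card_le_card h2

set_option maxHeartbeats 1000000 in
lemma aux_NAP (r₀ r₁ r₂ h : ℕ) (d e C : ℤ)
    (hr0 : 0 < r₀) (hr1 : 2 ≤ r₁) (hr2 : 0 < r₂) (hh2 : 2 ≤ h) (hhk : h + 2 ≤ r₀+r₁+r₂)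
    (hd1 : 1 ≤ d) (he1 : 1 ≤ e) (hde : d ≠ e) :
    min h (r₁+r₂) + min r₂ (min h (r₁+r₂)) + 2 ≤
      (((range (r₁+1) ×ˢ range (r₂+1)).filter (fun p => p.1+p.2 ≤ h ∧ h ≤ r₀+p.1+p.2)).image
        (fun p => C + (p.1:ℤ)*d + (p.2:ℤ)*(d+e))).card + ((h - r₀) + ((h - r₀) - r₁)) := by
  set T : Finset (ℕ × ℕ) := (range (r₁+1) ×ˢ range (r₂+1)).filter
      (fun p => p.1 + p.2 ≤ h ∧ h ≤ r₀ + p.1 + p.2) with hT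
  set f : ℕ × ℕ → ℤ := fun p => C + (p.1 : ℤ) * d + (p.2 : ℤ) * (d + e) with hf
  have hmemT : ∀ p : ℕ × ℕ,
      p ∈ T ↔ p.1 ≤ r₁ ∧ p.2 ≤ r₂ ∧ p.1 + p.2 ≤ h ∧ h ≤ r₀ + p.1 + p.2 := by
    intro p
    simp only [hT, mem_filter, mem_product, mem_range]
    omega
  set A := h - r₀ with hA
  set B := min h (r₁ + r₂) with hB
  set Smin := A + (A - r₁) with hSmin
  set Smax := B + min r₂ B with hSmaxd
  have hlev : ∀ p ∈ T, Smin ≤ p.1 + 2*p.2 ∧ p.1 + 2*p.2 ≤ Smax := by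
    intro p hp; rw [hmemT] at hp; omega
  show Smax + 2 ≤ (T.image f).card + Smin
  set vlo : ℕ → ℕ := fun s => max (s - B) ((s + 1 - r₁)/2) with hvlo
  set vhi : ℕ → ℕ := fun s => min (min r₂ (s - A)) (s/2) with hvhi
  have hlo_mem : ∀ s, Smin ≤ s → s ≤ Smax → (s - 2 * vlo s, vlo s) ∈ T ∧ 2 * vlo s ≤ s := by
    intro s h1 h2; simp only [hmemT, hvlo]; omega
  have hhi_mem : ∀ s, Smin ≤ s → s ≤ Smax → (s - 2 * vhi s, vhi s) ∈ T ∧ 2 * vhi s ≤ s := by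
    intro s h1 h2; simp only [hmemT, hvhi]; omega
  have hlo_step : ∀ s, vlo s ≤ vlo (s+1) ∧ vlo (s+1) ≤ vlo s + 1 := by
    intro s; simp only [hvlo]; omega
  have hhi_step : ∀ s, vhi s ≤ vhi (s+1) ∧ vhi (s+1) ≤ vhi s + 1 := by
    intro s; simp only [hvhi]; omega
  have hsandwich : ∀ p ∈ T, vlo (p.1 + 2*p.2) ≤ p.2 ∧ p.2 ≤ vhi (p.1 + 2*p.2) := by
    intro p hp; rw [hmemT] at hp; simp only [hvlo, hvhi]; omega
  -- a level with two points
  have hstar : ∃ q ∈ T, vlo (q.1 + 2*q.2) < q.2 := by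
    rcases le_or_gt h r₁ with hcase | hcase
    · refine ⟨(h - 2, 1), ?_, ?_⟩
      · rw [hmemT]; simp only; omega
      · have h1 := hsandwich (h, 0) (by rw [hmemT]; simp only; omega)
        simp only at h1 ⊢
        have heq2 : (h - 2) + 2*1 = h + 2*0 := by omega
        rw [heq2]
        omega
    · set s0 := min r₀ (h - r₁ + 1) with hs0
      set s2 := h - r₁ + 2 - s0 with hs2
      refine ⟨(r₁ - 2, s2), ?_, ?_⟩
      · rw [hmemT]; simp only; omega
      · have h1 := hsandwich (r₁, s2 - 1) (by rw [hmemT]; simp only; omega)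
        simp only at h1 ⊢
        have heq2 : r₁ + 2*(s2-1) = (r₁-2) + 2*s2 := by omega
        rw [heq2] at h1
        omega
  obtain ⟨q, hq, hqlt⟩ := hstar
  set sstar := q.1 + 2*q.2 with hsstar
  have hsb := hlev q hq
  have hstrict : vlo sstar < vhi sstar := lt_of_lt_of_le hqlt (hsandwich q hq).2
  set F : ℕ → ℕ → ℤ := fun s v => C + ((s:ℤ) - 2*(v:ℤ))*d + (v:ℤ)*(d+e) with hF
  have hFmem : ∀ s v, ((s - 2*v, v) ∈ T ∧ 2*v ≤ s) → F s v ∈ T.image f := by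
    rintro s v ⟨hm, hle⟩
    refine mem_image.mpr ⟨_, hm, ?_⟩
    simp only [hf, hF]
    have hc : ((s - 2*v : ℕ) : ℤ) = (s:ℤ) - 2*(v:ℤ) := by omega
    rw [hc]
  have hFstep : ∀ s v v', (v' = v ∨ v' = v + 1) → F s v < F (s+1) v' := by
    rintro s v v' (rfl | rfl) <;> simp only [hF] <;> push_cast <;> nlinarith [hd1, he1]
  have hFbr1 : d < e → F sstar (vlo sstar) < F sstar (vhi sstar) := by
    intro hlt
    simp only [hF]
    have h1 : (vlo sstar : ℤ) < (vhi sstar : ℤ) := by exact_mod_cast hstrict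
    nlinarith [mul_pos (by linarith : (0:ℤ) < (vhi sstar : ℤ) - vlo sstar) (by linarith : (0:ℤ) < e - d)]
  have hFbr2 : e < d → F sstar (vhi sstar) < F sstar (vlo sstar) := by
    intro hlt
    simp only [hF]
    have h1 : (vlo sstar : ℤ) < (vhi sstar : ℤ) := by exact_mod_cast hstrict
    nlinarith [mul_pos (by linarith : (0:ℤ) < (vhi sstar : ℤ) - vlo sstar) (by linarith : (0:ℤ) < d - e)]
  set N1 := sstar - Smin with hN1
  set n := Smax - Smin + 1 with hn
  have key : n + 1 ≤ (T.image f).card := by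
    rcases lt_or_gt_of_ne hde with hlt | hgt
    · -- d < e : vlo-path then vhi-path
      apply chain_card' (g := fun i => if i ≤ N1 then F (Smin + i) (vlo (Smin + i))
        else F (Smin + i - 1) (vhi (Smin + i - 1)))
      · intro i hi
        by_cases hiN : i ≤ N1
        · simp only [if_pos hiN]
          exact hFmem _ _ (hlo_mem (Smin + i) (by omega) (by omega))
        · simp only [if_neg hiN]
          exact hFmem _ _ (hhi_mem (Smin + i - 1) (by omega) (by omega))
      · intro i hi
        by_cases h1 : i + 1 ≤ N1
        · rw [if_pos (by omega), if_pos h1]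
          have heq2 : Smin + (i+1) = (Smin + i) + 1 := by omega
          rw [heq2]
          exact hFstep _ _ _ (by have := hlo_step (Smin + i); omega)
        · by_cases h2 : i ≤ N1
          · -- i = N1 : branch jump
            rw [if_pos h2, if_neg h1]
            have e1 : Smin + i = sstar := by omega
            have e2 : Smin + (i+1) - 1 = sstar := by omega
            rw [e1, e2]
            exact hFbr1 hlt
          · rw [if_neg h2, if_neg h1]
            have heq2 : Smin + (i+1) - 1 = (Smin + i - 1) + 1 := by omega
            rw [heq2]
            exact hFstep _ _ _ (by have := hhi_step (Smin + i - 1); omega)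
    · -- e < d : vhi-path then vlo-path
      apply chain_card' (g := fun i => if i ≤ N1 then F (Smin + i) (vhi (Smin + i))
        else F (Smin + i - 1) (vlo (Smin + i - 1)))
      · intro i hi
        by_cases hiN : i ≤ N1
        · simp only [if_pos hiN]
          exact hFmem _ _ (hhi_mem (Smin + i) (by omega) (by omega))
        · simp only [if_neg hiN]
          exact hFmem _ _ (hlo_mem (Smin + i - 1) (by omega) (by omega))
      · intro i hi
        by_cases h1 : i + 1 ≤ N1
        · rw [if_pos (by omega), if_pos h1]
          have heq2 : Smin + (i+1) = (Smin + i) + 1 := by omega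
          rw [heq2]
          exact hFstep _ _ _ (by have := hhi_step (Smin + i); omega)
        · by_cases h2 : i ≤ N1
          · rw [if_pos h2, if_neg h1]
            have e1 : Smin + i = sstar := by omega
            have e2 : Smin + (i+1) - 1 = sstar := by omega
            rw [e1, e2]
            exact hFbr2 hgt
          · rw [if_neg h2, if_neg h1]
            have heq2 : Smin + (i+1) - 1 = (Smin + i - 1) + 1 := by omega
            rw [heq2]
            exact hFstep _ _ _ (by have := hlo_step (Smin + i - 1); omega)
  omega

set_option maxHeartbeats 1000000 in
lemma aux_AP (r₀ r₁ r₂ h : ℕ) (d C : ℤ)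
    (hr0 : 0 < r₀) (hr1 : 2 ≤ r₁) (hr2 : 0 < r₂) (hh2 : 2 ≤ h) (hhk : h + 2 ≤ r₀+r₁+r₂)
    (hd1 : 1 ≤ d) :
    (((range (r₁+1) ×ˢ range (r₂+1)).filter (fun p => p.1 + p.2 ≤ h ∧ h ≤ r₀ + p.1 + p.2)).image
        (fun p => C + (p.1:ℤ)*d + (p.2:ℤ)*(d+d))).card
      = (min h (r₁+r₂) + min r₂ (min h (r₁+r₂)) + 1) - ((h - r₀) + ((h - r₀) - r₁)) := by
  set T : Finset (ℕ × ℕ) := (range (r₁+1) ×ˢ range (r₂+1)).filter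
      (fun p => p.1 + p.2 ≤ h ∧ h ≤ r₀ + p.1 + p.2) with hT
  set f : ℕ × ℕ → ℤ := fun p => C + (p.1 : ℤ) * d + (p.2 : ℤ) * (d + d) with hf
  have hmemT : ∀ p : ℕ × ℕ,
      p ∈ T ↔ p.1 ≤ r₁ ∧ p.2 ≤ r₂ ∧ p.1 + p.2 ≤ h ∧ h ≤ r₀ + p.1 + p.2 := by
    intro p
    simp only [hT, mem_filter, mem_product, mem_range]
    omega
  set A := h - r₀ with hA
  set B := min h (r₁ + r₂) with hB
  set Smin := A + (A - r₁) with hSmin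
  set Smax := B + min r₂ B with hSmaxd
  have hlev : ∀ p ∈ T, Smin ≤ p.1 + 2*p.2 ∧ p.1 + 2*p.2 ≤ Smax := by
    intro p hp; rw [hmemT] at hp; omega
  have hlevel_surj : ∀ s, Smin ≤ s → s ≤ Smax → ∃ p ∈ T, p.1 + 2*p.2 = s := by
    intro s h1 h2
    refine ⟨(s - 2*(max (s - B) ((s + 1 - r₁)/2)), max (s - B) ((s + 1 - r₁)/2)), ?_, ?_⟩
    · rw [hmemT]; omega
    · simp only; omega
  show (T.image f).card = Smax + 1 - Smin
  have himg : T.image f = (Icc Smin Smax).image (fun s : ℕ => C + (s : ℤ) * d) := by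
    ext z
    simp only [mem_image, mem_Icc]
    constructor
    · rintro ⟨p, hp, rfl⟩
      refine ⟨p.1 + 2*p.2, hlev p hp, ?_⟩
      simp only [hf]
      push_cast
      ring
    · rintro ⟨s, hs, rfl⟩
      obtain ⟨p, hp, hps⟩ := hlevel_surj s hs.1 hs.2
      refine ⟨p, hp, ?_⟩
      simp only [hf]
      rw [← hps]
      push_cast
      ring
  rw [himg, Finset.card_image_of_injective _ ?_, Nat.card_Icc]
  intro x y hxy
  simp only at hxy
  have hxy' : (x : ℤ) * d = (y : ℤ) * d := by linarith
  have : (x : ℤ) = y := mul_right_cancel₀ (by omega) hxy'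
  exact_mod_cast this

set_option maxHeartbeats 1000000 in
theorem three_elt_eq_iff_AP (h I M δ θ : ℕ) (a₀ a₁ a₂ : ℤ) (r₀ r₁ r₂ : ℕ)
    (ha01 : a₀ < a₁) (ha12 : a₁ < a₂)
    (hr0 : 0 < r₀) (hr1 : 2 ≤ r₁) (hr2 : 0 < r₂)
    (hh2 : 2 ≤ h) (hhk : h + 2 ≤ r₀ + r₁ + r₂)
    (r : ℕ → ℕ) (hrdef : r = fun j => if j = 0 then r₀ else if j = 1 then r₁ else r₂)
    (a : ℕ → ℤ) (hadef : a = fun j => if j = 0 then a₀ else if j = 1 then a₁ else a₂)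
    (hIk : I ≤ 3)
    (hI1 : ∑ j ∈ Finset.range I, r j ≤ h)
    (hI2 : ∀ I' ≤ 3, (∑ j ∈ Finset.range I', r j ≤ h) → I' ≤ I)
    (hM1 : ∑ j ∈ Finset.Ico (M + 1) 3, r j ≤ h)
    (hM2 : ∀ M', (∑ j ∈ Finset.Ico (M' + 1) 3, r j ≤ h) → M ≤ M')
    (hδ : (δ : ℤ) = (h : ℤ) - ∑ j ∈ Finset.range I, (r j : ℤ))
    (hθ : (θ : ℤ) = (h : ℤ) - ∑ j ∈ Finset.Ico (M + 1) 3, (r j : ℤ)) :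
    ((genSumset 3 a r h).ncard : ℤ) = Lval 3 I M r δ θ ↔ a₁ - a₀ = a₂ - a₁ := by
  subst hrdef hadef
  set d := a₁ - a₀ with hd
  set e := a₂ - a₁ with he
  have hd1 : 1 ≤ d := by omega
  have he1 : 1 ≤ e := by omega
  set C : ℤ := (h : ℤ) * a₀ with hC
  set T : Finset (ℕ × ℕ) := (range (r₁+1) ×ˢ range (r₂+1)).filter
      (fun p => p.1 + p.2 ≤ h ∧ h ≤ r₀ + p.1 + p.2) with hT
  set f : ℕ × ℕ → ℤ := fun p => C + (p.1 : ℤ) * d + (p.2 : ℤ) * (d + e) with hf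
  have hmemT : ∀ p : ℕ × ℕ,
      p ∈ T ↔ p.1 ≤ r₁ ∧ p.2 ≤ r₂ ∧ p.1 + p.2 ≤ h ∧ h ≤ r₀ + p.1 + p.2 := by
    intro p
    simp only [hT, mem_filter, mem_product, mem_range]
    omega
  -- sumset as finite image
  have hset : genSumset 3 (fun j => if j = 0 then a₀ else if j = 1 then a₁ else a₂)
      (fun j => if j = 0 then r₀ else if j = 1 then r₁ else r₂) h = ↑(T.image f) := by
    ext z
    simp only [genSumset, Set.mem_setOf_eq, coe_image, Set.mem_image, mem_coe]
    constructor
    · rintro ⟨s, hs1, hs2, rfl⟩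
      have h0 : s 0 ≤ r₀ := by simpa using hs1 0 (by norm_num)
      have h1' : s 1 ≤ r₁ := by simpa using hs1 1 (by norm_num)
      have h2' : s 2 ≤ r₂ := by simpa using hs1 2 (by norm_num)
      rw [Finset.sum_range_succ, Finset.sum_range_succ, Finset.sum_range_one] at hs2
      refine ⟨(s 1, s 2), ?_, ?_⟩
      · rw [hmemT]; simp only; omega
      · simp only [hf, Finset.sum_range_succ, Finset.sum_range_one]
        norm_num
        have : (s 0 : ℤ) + s 1 + s 2 = (h : ℤ) := by exact_mod_cast hs2
        simp only [hC, hd, he]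
        linear_combination (-a₀) * this
    · rintro ⟨p, hp, rfl⟩
      rw [hmemT] at hp
      refine ⟨fun i => if i = 0 then h - p.1 - p.2 else if i = 1 then p.1 else p.2, ?_, ?_, ?_⟩
      · intro i hi
        interval_cases i <;> simp <;> omega
      · rw [Finset.sum_range_succ, Finset.sum_range_succ, Finset.sum_range_one]
        simp only
        norm_num
        omega
      · rw [Finset.sum_range_succ, Finset.sum_range_succ, Finset.sum_range_one]
        simp only [hf, hC, hd, he]
        norm_num
        have hc : ((h - p.1 - p.2 : ℕ) : ℤ) = (h : ℤ) - p.1 - p.2 := by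
          have := hp.2.2.1; push_cast [Nat.sub_sub]; omega
        rw [hc]; ring
  rw [hset, Set.ncard_coe_finset]
  -- the level interval
  set A := h - r₀ with hA
  set B := min h (r₁ + r₂) with hB
  set Smin := A + (A - r₁) with hSmin
  set Smax := B + min r₂ B with hSmaxd
  have hlev : ∀ p ∈ T, Smin ≤ p.1 + 2*p.2 ∧ p.1 + 2*p.2 ≤ Smax := by
    intro p hp; rw [hmemT] at hp; omega
  have hAB : Smin ≤ Smax := by omega
  -- I and M values
  have hI3 : I ≤ 2 := by
    by_contra hc
    have : I = 3 := by omega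
    subst this
    rw [Finset.sum_range_succ, Finset.sum_range_succ, Finset.sum_range_one] at hI1
    norm_num at hI1
    omega
  have hIup : h < ∑ j ∈ Finset.range (I+1), (fun j => if j = 0 then r₀ else if j = 1 then r₁ else r₂) j := by
    by_contra hc
    push_neg at hc
    have := hI2 (I+1) (by omega) hc
    omega
  have hM3 : M ≤ 2 := by
    have := hM2 2 (by simp)
    omega
  have hMdn : 1 ≤ M → h < ∑ j ∈ Finset.Ico M 3, (fun j => if j = 0 then r₀ else if j = 1 then r₁ else r₂) j := by
    intro hM1'
    by_contra hc
    push_neg at hc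
    have h' : Finset.Ico ((M-1)+1) 3 = Finset.Ico M 3 := by congr 1; omega
    have := hM2 (M-1) (by rw [h']; exact hc)
    omega
  have hSmin_eq : (Smin : ℤ) = (∑ j ∈ Finset.range I, (j : ℤ) * (fun j => if j = 0 then r₀ else if j = 1 then r₁ else r₂) j) + I * δ := by
    interval_cases I <;>
      simp only [Finset.sum_range_succ, Finset.sum_range_one, Finset.sum_range_zero] at hδ hI1 hIup ⊢ <;>
      norm_num at hδ hI1 hIup ⊢ <;> omega
  have hSmax_eq : (Smax : ℤ) = (∑ j ∈ Finset.Ico (M+1) 3, (j : ℤ) * (fun j => if j = 0 then r₀ else if j = 1 then r₁ else r₂) j) + M * θ := by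
    interval_cases M <;>
      [ (have hd3 := hMdn); (have hd3 := hMdn (by norm_num)); (have hd3 := hMdn (by norm_num))] <;>
      simp only [show Finset.Ico 1 3 = {1, 2} from rfl, show Finset.Ico 2 3 = {2} from rfl,
        show Finset.Ico 3 3 = (∅ : Finset ℕ) from rfl, Finset.sum_insert, Finset.sum_singleton,
        Finset.sum_empty] at hθ hM1 hd3 ⊢ <;>
      norm_num at hθ hM1 hd3 ⊢ <;> omega
  have hLval : Lval 3 I M (fun j => if j = 0 then r₀ else if j = 1 then r₁ else r₂) δ θ
      = (Smax : ℤ) - (Smin : ℤ) + 1 := by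
    simp only [Lval]
    rw [hSmin_eq, hSmax_eq]
    ring
  clear hset hIk hI1 hI2 hM1 hM2 hδ hθ hI3 hIup hM3 hMdn hSmin_eq hSmax_eq ha01 ha12 hd he hC
  clear_value d e C T
  clear a₀ a₁ a₂
  constructor
  · intro heq
    by_contra hne'
    have hcard := aux_NAP r₀ r₁ r₂ h d e C hr0 hr1 hr2 hh2 hhk hd1 he1 hne'
    rw [← hf, ← hT] at hcard
    rw [hLval] at heq
    omega
  · intro hde
    subst hde
    have hcard := aux_AP r₀ r₁ r₂ h d C hr0 hr1 hr2 hh2 hhk hd1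
    rw [← hf, ← hT] at hcard
    rw [hLval, hcard]
    omega
end

section
/- Let A = {a_0 < a_1 < a_2 < a_3} be a set of 4 integers, r = (r_0, 1, 1, r_3) with r_0, r_3 positive integers, and h an integer with 2 ≤ h ≤ r_0 + 2 + r_3 − 2. Then |h^{(r)}A| = L(r,h) if and only if a_1 − a_0 = a_3 − a_2. -/
open Finset

namespace FourElt

def T (h r₀ r₃ : ℕ) : Finset (ℕ × ℕ) :=
  ((Finset.range (r₃+1)) ×ˢ (Finset.range 4)).filter
    (fun p => p.1 + (p.2 % 2 + p.2 / 2) ≤ h ∧ h ≤ p.1 + (p.2 % 2 + p.2 / 2) + r₀)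

lemma mem_T {h r₀ r₃ : ℕ} {p : ℕ × ℕ} : p ∈ T h r₀ r₃ ↔
    p.1 ≤ r₃ ∧ p.2 < 4 ∧ p.1 + (p.2 % 2 + p.2 / 2) ≤ h ∧
      h ≤ p.1 + (p.2 % 2 + p.2 / 2) + r₀ := by
  simp [T, Finset.mem_filter, Finset.mem_product, Nat.lt_succ_iff, and_assoc]

def φf (p : ℕ × ℕ) : ℕ := 3 * p.1 + p.2

def wv (a₀ a₁ a₂ : ℤ) (m : ℕ) : ℤ :=
  if m = 0 then 0 else if m = 1 then a₁ - a₀ else if m = 2 then a₂ - a₀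
    else a₁ - a₀ + (a₂ - a₀)

def gf (h : ℕ) (a₀ a₁ a₂ a₃ : ℤ) (p : ℕ × ℕ) : ℤ :=
  (h : ℤ) * a₀ + (p.1 : ℤ) * (a₃ - a₀) + wv a₀ a₁ a₂ p.2

def ρf (h : ℕ) (a₀ a₁ a₂ a₃ : ℤ) (n : ℕ) : ℤ :=
  (h : ℤ) * a₀ + ((n / 3 : ℕ) : ℤ) * (a₃ - a₀) + wv a₀ a₁ a₂ (n % 3)

def nmin (h r₀ : ℕ) : ℕ := if h ≤ r₀ then 0 else if h = r₀ + 1 then 1 else 3*(h - r₀) - 3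
def nmax (h r₃ : ℕ) : ℕ := if h ≤ r₃ then 3*h else if h = r₃ + 1 then 3*r₃ + 2 else 3*r₃ + 3

lemma setEq (h : ℕ) (a₀ a₁ a₂ a₃ : ℤ) (r₀ r₃ : ℕ) :
    genSumset 4 (fun j => if j = 0 then a₀ else if j = 1 then a₁ else if j = 2 then a₂ else a₃)
      (fun j => if j = 0 then r₀ else if j = 1 then 1 else if j = 2 then 1 else r₃) h
      = ↑((T h r₀ r₃).image (gf h a₀ a₁ a₂ a₃)) := by
  ext z
  simp only [genSumset, Set.mem_setOf_eq, Finset.coe_image, Set.mem_image, Finset.mem_coe, mem_T]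
  constructor
  · rintro ⟨s, hs, hsum, rfl⟩
    have h0 := hs 0 (by norm_num)
    have h1 := hs 1 (by norm_num)
    have h2 := hs 2 (by norm_num)
    have h3 := hs 3 (by norm_num)
    norm_num at h0 h1 h2 h3
    rw [show (4:ℕ) = 3+1 from rfl, Finset.sum_range_succ, Finset.sum_range_succ,
      Finset.sum_range_succ, Finset.sum_range_one] at hsum
    refine ⟨(s 3, s 1 + 2 * s 2), ?_, ?_⟩
    · exact ⟨h3, by omega, by omega, by omega⟩
    · have hc : ((s 0 : ℤ)) = (h:ℤ) - s 1 - s 2 - s 3 := by omega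
      rw [show (4:ℕ) = 3+1 from rfl, Finset.sum_range_succ, Finset.sum_range_succ,
        Finset.sum_range_succ, Finset.sum_range_one]
      interval_cases hs1 : s 1 <;> interval_cases hs2 : s 2 <;>
        simp [gf, wv, hc] <;> push_cast <;> ring
  · rintro ⟨⟨t, m⟩, hmem, rfl⟩
    obtain ⟨ht, hm, hlo, hhi⟩ := hmem
    have ht' : t ≤ r₃ := ht
    have hm' : m < 4 := hm
    have hlo' : t + (m % 2 + m / 2) ≤ h := hlo
    have hhi' : h ≤ t + (m % 2 + m / 2) + r₀ := hhi
    clear ht hm hlo hhi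
    refine ⟨fun i => if i = 0 then h - t - (m % 2 + m / 2) else if i = 1 then m % 2
      else if i = 2 then m / 2 else if i = 3 then t else 0, ?_, ?_, ?_⟩
    · intro i hi; interval_cases i <;> simp <;> omega
    · rw [show (4:ℕ) = 3+1 from rfl, Finset.sum_range_succ, Finset.sum_range_succ,
        Finset.sum_range_succ, Finset.sum_range_one]
      simp; omega
    · rw [show (4:ℕ) = 3+1 from rfl, Finset.sum_range_succ, Finset.sum_range_succ,
        Finset.sum_range_succ, Finset.sum_range_one]
      interval_cases m <;> simp [gf, wv, Nat.sub_sub] <;>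
        rw [Nat.cast_sub (by omega)] <;> push_cast <;> ring

lemma imageφ (h r₀ r₃ : ℕ) (hr0 : 0 < r₀) (hr3 : 0 < r₃) (hh2 : 2 ≤ h)
    (hhk : h ≤ r₀ + r₃) :
    (T h r₀ r₃).image φf = Finset.Icc (nmin h r₀) (nmax h r₃) := by
  ext n
  simp only [Finset.mem_image, Finset.mem_Icc, mem_T, nmin, nmax, φf]
  constructor
  · rintro ⟨⟨t, m⟩, ⟨ht, hm, hlo, hhi⟩, rfl⟩
    have ht' : t ≤ r₃ := ht
    have hm' : m < 4 := hm
    have hlo' : t + (m % 2 + m / 2) ≤ h := hlo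
    have hhi' : h ≤ t + (m % 2 + m / 2) + r₀ := hhi
    split_ifs <;> omega
  · intro hn
    by_cases hc : n / 3 ≤ r₃ ∧ n / 3 + (n % 3 % 2 + n % 3 / 2) ≤ h ∧
        h ≤ n / 3 + (n % 3 % 2 + n % 3 / 2) + r₀
    · exact ⟨(n / 3, n % 3), ⟨hc.1, by omega, hc.2.1, hc.2.2⟩, by omega⟩
    · refine ⟨(n / 3 - 1, 3), ⟨?_, by omega, ?_, ?_⟩, ?_⟩ <;> split_ifs at hn <;> omega

lemma master {D w w' : ℤ} (hD : 0 < D) (t t' : ℕ) (heq : (t:ℤ)*D + w = (t':ℤ)*D + w')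
    (hw : 0 ≤ w) (hw2 : w < 2*D) (hw' : 0 ≤ w') (hw'2 : w' < 2*D) :
    (t = t' ∧ w = w') ∨ (t' = t+1 ∧ w = w' + D) ∨ (t = t'+1 ∧ w' = w + D) := by
  have he : w - w' = ((t':ℤ) - t) * D := by linear_combination heq
  have hb1 : (t':ℤ) - t < 2 := by
    by_contra hcon
    push_neg at hcon
    have := mul_le_mul_of_nonneg_right hcon hD.le
    linarith
  have hb2 : (t:ℤ) - t' < 2 := by
    by_contra hcon
    push_neg at hcon
    have := mul_le_mul_of_nonneg_right hcon hD.le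
    linarith
  have hcase : t = t' ∨ t' = t + 1 ∨ t = t' + 1 := by omega
  rcases hcase with hc | hc | hc
  · left; refine ⟨hc, ?_⟩; subst hc; linarith [he]
  · right; left; refine ⟨hc, ?_⟩
    have : (t':ℤ) = (t:ℤ) + 1 := by omega
    rw [this] at he; linarith [he]
  · right; right; refine ⟨hc, ?_⟩
    have : (t:ℤ) = (t':ℤ) + 1 := by omega
    rw [this] at he; linarith [he]

lemma g_injOn {h : ℕ} {a₀ a₁ a₂ a₃ : ℤ} (ha01 : a₀ < a₁) (ha12 : a₁ < a₂) (ha23 : a₂ < a₃)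
    (hne : a₁ - a₀ ≠ a₃ - a₂) {t m t' m' : ℕ} (hm : m < 4) (hm' : m' < 4)
    (heq : gf h a₀ a₁ a₂ a₃ (t, m) = gf h a₀ a₁ a₂ a₃ (t', m')) : t = t' ∧ m = m' := by
  have hD : 0 < a₃ - a₀ := by linarith
  have heq' : (t:ℤ) * (a₃ - a₀) + wv a₀ a₁ a₂ m
      = (t':ℤ) * (a₃ - a₀) + wv a₀ a₁ a₂ m' := by
    simp only [gf] at heq; linarith
  have hwb : ∀ k < 4, 0 ≤ wv a₀ a₁ a₂ k ∧ wv a₀ a₁ a₂ k < 2 * (a₃ - a₀) := by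
    intro k hk; interval_cases k <;> simp [wv] <;> omega
  obtain ⟨hw1, hw2⟩ := hwb m hm
  obtain ⟨hw1', hw2'⟩ := hwb m' hm'
  rcases master hD t t' heq' hw1 hw2 hw1' hw2' with ⟨h1, h2⟩ | ⟨h1, h2⟩ | ⟨h1, h2⟩
  · refine ⟨h1, ?_⟩
    interval_cases m <;> interval_cases m' <;> simp [wv] at h2 <;> omega
  · exfalso; interval_cases m <;> interval_cases m' <;> simp [wv] at h2 <;> omega
  · exfalso; interval_cases m <;> interval_cases m' <;> simp [wv] at h2 <;> omega

lemma ρ_inj {h : ℕ} {a₀ a₁ a₂ a₃ : ℤ} (ha01 : a₀ < a₁) (ha12 : a₁ < a₂) (ha23 : a₂ < a₃) :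
    Function.Injective (ρf h a₀ a₁ a₂ a₃) := by
  intro n n' heq
  have hD : 0 < a₃ - a₀ := by linarith
  have heq' : ((n/3 : ℕ):ℤ) * (a₃ - a₀) + wv a₀ a₁ a₂ (n % 3)
      = ((n'/3 : ℕ):ℤ) * (a₃ - a₀) + wv a₀ a₁ a₂ (n' % 3) := by
    simp only [ρf] at heq; linarith
  have hwb : ∀ k < 3, 0 ≤ wv a₀ a₁ a₂ k ∧ wv a₀ a₁ a₂ k < a₃ - a₀ := by
    intro k hk; interval_cases k <;> simp [wv] <;> omega
  obtain ⟨hw1, hw2⟩ := hwb (n % 3) (Nat.mod_lt _ (by norm_num))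
  obtain ⟨hw1', hw2'⟩ := hwb (n' % 3) (Nat.mod_lt _ (by norm_num))
  rcases master hD (n/3) (n'/3) heq' hw1 (by linarith) hw1' (by linarith)
    with ⟨h1, h2⟩ | ⟨h1, h2⟩ | ⟨h1, h2⟩
  · have : n % 3 = n' % 3 := by
      have h3 : n % 3 < 3 := Nat.mod_lt _ (by norm_num)
      have h3' : n' % 3 < 3 := Nat.mod_lt _ (by norm_num)
      interval_cases hx : n % 3 <;> interval_cases hy : n' % 3 <;> simp [wv] at h2 <;> omega
    omega
  · exfalso; linarith
  · exfalso; linarith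

lemma g_eq_ρ_φ {h : ℕ} {a₀ a₁ a₂ a₃ : ℤ} (hda : a₁ - a₀ = a₃ - a₂) {t m : ℕ} (hm : m < 4) :
    gf h a₀ a₁ a₂ a₃ (t, m) = ρf h a₀ a₁ a₂ a₃ (3 * t + m) := by
  interval_cases m <;>
    simp [gf, ρf, wv, Nat.mul_add_div, Nat.mul_add_mod] <;> push_cast <;> linarith

lemma Lcalc (h I M δ θ : ℕ) (r₀ r₃ : ℕ) (hr0 : 0 < r₀) (hr3 : 0 < r₃)
    (hh2 : 2 ≤ h) (hhk : h ≤ r₀ + r₃)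
    (r : ℕ → ℕ)
    (hrdef : r = fun j => if j = 0 then r₀ else if j = 1 then 1 else if j = 2 then 1 else r₃)
    (hIk : I ≤ 4)
    (hI1 : ∑ j ∈ Finset.range I, r j ≤ h)
    (hI2 : ∀ I' ≤ 4, (∑ j ∈ Finset.range I', r j ≤ h) → I' ≤ I)
    (hM1 : ∑ j ∈ Finset.Ico (M + 1) 4, r j ≤ h)
    (hM2 : ∀ M', (∑ j ∈ Finset.Ico (M' + 1) 4, r j ≤ h) → M ≤ M')
    (hδ : (δ : ℤ) = (h : ℤ) - ∑ j ∈ Finset.range I, (r j : ℤ))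
    (hθ : (θ : ℤ) = (h : ℤ) - ∑ j ∈ Finset.Ico (M + 1) 4, (r j : ℤ)) :
    Lval 4 I M r δ θ = ((nmax h r₃ : ℤ) - (nmin h r₀ : ℤ)) + 1 := by
  subst hrdef
  have hI3 : I ≤ 3 := by
    by_contra hx
    have h4 : I = 4 := by omega
    subst h4
    simp [Finset.sum_range_succ] at hI1
    omega
  have hM3 : M ≤ 3 := hM2 3 (by simp)
  have hIubN : (∑ j ∈ Finset.range I, (fun j => if j = 0 then r₀ else if j = 1 then 1
      else if j = 2 then 1 else r₃) j)
      = if I = 0 then 0 else if I = 1 then r₀ else if I = 2 then r₀ + 1 else r₀ + 2 := by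
    interval_cases I <;> norm_num [Finset.sum_range_succ]
  have hM1N' : (∑ j ∈ Finset.Ico (M+1) 4, (fun j => if j = 0 then r₀ else if j = 1 then 1
      else if j = 2 then 1 else r₃) j)
      = if M = 0 then r₃ + 2 else if M = 1 then r₃ + 1 else if M = 2 then r₃ else 0 := by
    interval_cases M <;> norm_num [Finset.sum_Ico_eq_sum_range, Finset.sum_range_succ] <;> omega
  rw [hIubN] at hI1
  rw [hM1N'] at hM1
  have g1 : r₀ ≤ h → 1 ≤ I := fun hh => hI2 1 (by norm_num) (by simpa using hh)
  have g2 : r₀ + 1 ≤ h → 2 ≤ I := fun hh =>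
    hI2 2 (by norm_num) (by norm_num [Finset.sum_range_succ]; omega)
  have g3 : r₀ + 2 ≤ h → 3 ≤ I := fun hh =>
    hI2 3 (by norm_num) (by norm_num [Finset.sum_range_succ]; omega)
  have gM2 : r₃ ≤ h → M ≤ 2 := fun hh =>
    hM2 2 (by norm_num [Finset.sum_Ico_eq_sum_range, Finset.sum_range_succ]; omega)
  have gM1 : r₃ + 1 ≤ h → M ≤ 1 := fun hh =>
    hM2 1 (by norm_num [Finset.sum_Ico_eq_sum_range, Finset.sum_range_succ]; omega)
  have gM0 : r₃ + 2 ≤ h → M = 0 := fun hh =>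
    Nat.le_zero.mp (hM2 0 (by norm_num [Finset.sum_Ico_eq_sum_range, Finset.sum_range_succ]; omega))
  have G : (h < r₀ ∧ I = 0) ∨ (h = r₀ ∧ I = 1) ∨ (h = r₀ + 1 ∧ I = 2)
      ∨ (r₀ + 2 ≤ h ∧ I = 3) := by
    rcases Nat.lt_or_ge h r₀ with hc | hc
    · left; refine ⟨hc, ?_⟩; interval_cases I <;> simp at hI1 <;> omega
    · rcases Nat.lt_or_ge h (r₀ + 1) with hc1 | hc1
      · right; left; refine ⟨by omega, ?_⟩
        have := g1 hc
        interval_cases I <;> simp at hI1 <;> omega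
      · rcases Nat.lt_or_ge h (r₀ + 2) with hc2 | hc2
        · right; right; left; refine ⟨by omega, ?_⟩
          have := g2 hc1
          interval_cases I <;> simp at hI1 <;> omega
        · right; right; right; refine ⟨hc2, ?_⟩
          have := g3 hc2
          omega
  have GM : (h < r₃ ∧ M = 3) ∨ (h = r₃ ∧ M = 2) ∨ (h = r₃ + 1 ∧ M = 1)
      ∨ (r₃ + 2 ≤ h ∧ M = 0) := by
    rcases Nat.lt_or_ge h r₃ with hc | hc
    · left; refine ⟨hc, ?_⟩; interval_cases M <;> simp at hM1 <;> omega
    · rcases Nat.lt_or_ge h (r₃ + 1) with hc1 | hc1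
      · right; left; refine ⟨by omega, ?_⟩
        have := gM2 hc
        interval_cases M <;> simp at hM1 <;> omega
      · rcases Nat.lt_or_ge h (r₃ + 2) with hc2 | hc2
        · right; right; left; refine ⟨by omega, ?_⟩
          have := gM1 hc1
          interval_cases M <;> simp at hM1 <;> omega
        · right; right; right; exact ⟨hc2, gM0 hc2⟩
  have hpreZ : (∑ j ∈ Finset.range I, ((fun j => if j = 0 then r₀ else if j = 1 then 1
      else if j = 2 then 1 else r₃) j : ℤ))
      = ((if I = 0 then 0 else if I = 1 then r₀ else if I = 2 then r₀ + 1 else r₀ + 2 : ℕ) : ℤ) := by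
    interval_cases I <;> norm_num [Finset.sum_range_succ] <;> push_cast <;> ring
  have hsufZ : (∑ j ∈ Finset.Ico (M+1) 4, ((fun j => if j = 0 then r₀ else if j = 1 then 1
      else if j = 2 then 1 else r₃) j : ℤ))
      = ((if M = 0 then r₃ + 2 else if M = 1 then r₃ + 1 else if M = 2 then r₃ else 0 : ℕ) : ℤ) := by
    interval_cases M <;> norm_num [Finset.sum_Ico_eq_sum_range, Finset.sum_range_succ] <;>
      push_cast <;> ring
  rw [hpreZ] at hδ
  rw [hsufZ] at hθ
  rcases G with ⟨hG, rfl⟩ | ⟨hG, rfl⟩ | ⟨hG, rfl⟩ | ⟨hG, rfl⟩ <;>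
    rcases GM with ⟨hGM, rfl⟩ | ⟨hGM, rfl⟩ | ⟨hGM, rfl⟩ | ⟨hGM, rfl⟩ <;>
    norm_num [Lval, Finset.sum_Ico_eq_sum_range, Finset.sum_range_succ] at hδ hθ ⊢ <;>
    simp only [nmin, nmax] <;> split_ifs <;> push_cast <;> omega

end FourElt

theorem four_elt_r1_r2_eq_one (h I M δ θ : ℕ) (a₀ a₁ a₂ a₃ : ℤ) (r₀ r₃ : ℕ)
    (ha01 : a₀ < a₁) (ha12 : a₁ < a₂) (ha23 : a₂ < a₃)
    (hr0 : 0 < r₀) (hr3 : 0 < r₃)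
    (hh2 : 2 ≤ h) (hhk : h + 2 ≤ r₀ + 2 + r₃)
    (r : ℕ → ℕ)
    (hrdef : r = fun j => if j = 0 then r₀ else if j = 1 then 1 else if j = 2 then 1 else r₃)
    (a : ℕ → ℤ)
    (hadef : a = fun j => if j = 0 then a₀ else if j = 1 then a₁ else if j = 2 then a₂ else a₃)
    (hIk : I ≤ 4)
    (hI1 : ∑ j ∈ Finset.range I, r j ≤ h)
    (hI2 : ∀ I' ≤ 4, (∑ j ∈ Finset.range I', r j ≤ h) → I' ≤ I)
    (hM1 : ∑ j ∈ Finset.Ico (M + 1) 4, r j ≤ h)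
    (hM2 : ∀ M', (∑ j ∈ Finset.Ico (M' + 1) 4, r j ≤ h) → M ≤ M')
    (hδ : (δ : ℤ) = (h : ℤ) - ∑ j ∈ Finset.range I, (r j : ℤ))
    (hθ : (θ : ℤ) = (h : ℤ) - ∑ j ∈ Finset.Ico (M + 1) 4, (r j : ℤ)) :
    ((genSumset 4 a r h).ncard : ℤ) = Lval 4 I M r δ θ ↔ a₁ - a₀ = a₃ - a₂ := by
  classical
  have hhk' : h ≤ r₀ + r₃ := by omega
  subst hrdef
  subst hadef
  rw [FourElt.setEq h a₀ a₁ a₂ a₃ r₀ r₃, Set.ncard_coe_finset]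
  have hL := FourElt.Lcalc h I M δ θ r₀ r₃ hr0 hr3 hh2 hhk' _ rfl hIk hI1 hI2 hM1 hM2 hδ hθ
  have hmono : FourElt.nmin h r₀ ≤ FourElt.nmax h r₃ := by
    simp only [FourElt.nmin, FourElt.nmax]; split_ifs <;> omega
  have hcard : ((FourElt.T h r₀ r₃).image FourElt.φf).card
      = FourElt.nmax h r₃ + 1 - FourElt.nmin h r₀ := by
    rw [FourElt.imageφ h r₀ r₃ hr0 hr3 hh2 hhk']
    exact Nat.card_Icc _ _
  constructor
  · intro hEq
    by_contra hda
    have hinj : ((FourElt.T h r₀ r₃).image (FourElt.gf h a₀ a₁ a₂ a₃)).card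
        = (FourElt.T h r₀ r₃).card := by
      apply Finset.card_image_of_injOn
      intro p hp q hq heq
      rw [Finset.mem_coe, FourElt.mem_T] at hp hq
      obtain ⟨h1, h2⟩ := FourElt.g_injOn ha01 ha12 ha23 hda hp.2.1 hq.2.1 heq
      exact Prod.ext h1 h2
    set t0 := h - (r₀ + 1) with ht0
    have hw1 : ((t0, 3) : ℕ × ℕ) ∈ FourElt.T h r₀ r₃ := by
      rw [FourElt.mem_T]; refine ⟨by omega, by norm_num, by omega, by omega⟩
    have hw2 : ((t0 + 1, 0) : ℕ × ℕ) ∈ FourElt.T h r₀ r₃ := by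
      rw [FourElt.mem_T]; refine ⟨by omega, by norm_num, by omega, by omega⟩
    have hlt : ((FourElt.T h r₀ r₃).image FourElt.φf).card < (FourElt.T h r₀ r₃).card := by
      rcases lt_or_eq_of_le (Finset.card_image_le
          (s := FourElt.T h r₀ r₃) (f := FourElt.φf)) with hl | he
      · exact hl
      · exfalso
        have hio : Set.InjOn FourElt.φf ↑(FourElt.T h r₀ r₃) := Finset.card_image_iff.mp he
        have : ((t0, 3) : ℕ × ℕ) = (t0 + 1, 0) := by
          apply hio hw1 hw2
          simp [FourElt.φf]; omega
        simp at this
    rw [hinj, hL] at hEq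
    omega
  · intro hda
    have himg2 : (FourElt.T h r₀ r₃).image (FourElt.gf h a₀ a₁ a₂ a₃)
        = ((FourElt.T h r₀ r₃).image FourElt.φf).image (FourElt.ρf h a₀ a₁ a₂ a₃) := by
      rw [Finset.image_image]
      apply Finset.image_congr
      intro p hp
      rw [Finset.mem_coe, FourElt.mem_T] at hp
      have := FourElt.g_eq_ρ_φ (h := h) hda (t := p.1) hp.2.1
      simpa [Function.comp, FourElt.φf] using this
    rw [himg2, Finset.card_image_of_injective _ (FourElt.ρ_inj ha01 ha12 ha23), hcard, hL]
    push_cast [Nat.cast_sub (by omega : FourElt.nmin h r₀ ≤ FourElt.nmax h r₃ + 1)]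
    ring
end

section
/- Let A = {a_0 < a_1 < a_2 < a_3} be a set of 4 integers, r = (r_0, r_1, r_2, r_3) positive integers with r_1 ≥ 2 or r_2 ≥ 2, and h an integer with 2 ≤ h ≤ r_0 + r_1 + r_2 + r_3 − 2. Then |h^{(r)}A| = L(r,h) if and only if A is a 4-term arithmetic progression. -/
open Finset

namespace FourAP

abbrev Cfg := ℕ × ℕ × ℕ × ℕ
def F (r0 r1 r2 r3 h : ℕ) : Finset Cfg :=
  ((range (r0+1)) ×ˢ (range (r1+1)) ×ˢ (range (r2+1)) ×ˢ (range (r3+1))).filter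
    (fun s => s.1 + s.2.1 + s.2.2.1 + s.2.2.2 = h)
def Sq (s : Cfg) : ℕ := s.2.1 + 2 * s.2.2.1 + 3 * s.2.2.2
def ph (a0 a1 a2 a3 : ℤ) (s : Cfg) : ℤ :=
  (s.1 : ℤ) * a0 + (s.2.1 : ℤ) * a1 + (s.2.2.1 : ℤ) * a2 + (s.2.2.2 : ℤ) * a3
def mv (r0 r1 r2 h : ℕ) : ℕ := (h - r0) + (h - (r0+r1)) + (h - (r0+r1+r2))
def Mv (r1 r2 r3 h : ℕ) : ℕ := min h (r1+r2+r3) + min h (r2+r3) + min h r3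
lemma mem_F_iff {r0 r1 r2 r3 h : ℕ} {s : Cfg} :
    s ∈ F r0 r1 r2 r3 h ↔
      s.1 ≤ r0 ∧ s.2.1 ≤ r1 ∧ s.2.2.1 ≤ r2 ∧ s.2.2.2 ≤ r3 ∧
        s.1 + s.2.1 + s.2.2.1 + s.2.2.2 = h := by
  obtain ⟨s0, s1, s2, s3⟩ := s
  simp [F, mem_filter, mem_product, Nat.lt_succ_iff]
  tauto
lemma S_bounds {r0 r1 r2 r3 h : ℕ} {s : Cfg} (hs : s ∈ F r0 r1 r2 r3 h) :
    mv r0 r1 r2 h ≤ Sq s ∧ Sq s ≤ Mv r1 r2 r3 h := by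
  rw [mem_F_iff] at hs
  obtain ⟨s0, s1, s2, s3⟩ := s
  simp only [Sq, mv, Mv] at *
  omega

section
variable {r0 r1 r2 r3 h : ℕ} {a0 a1 a2 a3 : ℤ}

lemma up_step (h01 : a0 < a1) (h12 : a1 < a2) (h23 : a2 < a3)
    (hr1 : 0 < r1) (hr2 : 0 < r2) (hr3 : 0 < r3)
    {s : Cfg} (hs : s ∈ F r0 r1 r2 r3 h) (hlt : Sq s < Mv r1 r2 r3 h) :
    ∃ s' ∈ F r0 r1 r2 r3 h, Sq s' = Sq s + 1 ∧ ph a0 a1 a2 a3 s < ph a0 a1 a2 a3 s' := by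
  rw [mem_F_iff] at hs
  obtain ⟨s0, s1, s2, s3⟩ := s
  simp only at hs
  obtain ⟨h0, h1, h2, h3, hsum⟩ := hs
  by_cases c0 : 1 ≤ s0 ∧ s1 < r1
  · refine ⟨(s0 - 1, s1 + 1, s2, s3), ?_, ?_, ?_⟩
    · rw [mem_F_iff]; simp only; omega
    · simp only [Sq]; omega
    · simp only [ph]
      have : ((s0 - 1 : ℕ) : ℤ) = (s0 : ℤ) - 1 := by omega
      rw [this]; push_cast; nlinarith [h01]
  · by_cases c1 : 1 ≤ s1 ∧ s2 < r2
    · refine ⟨(s0, s1 - 1, s2 + 1, s3), ?_, ?_, ?_⟩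
      · rw [mem_F_iff]; simp only; omega
      · simp only [Sq]; omega
      · simp only [ph]
        have : ((s1 - 1 : ℕ) : ℤ) = (s1 : ℤ) - 1 := by omega
        rw [this]; push_cast; nlinarith [h12]
    · by_cases c2 : 1 ≤ s2 ∧ s3 < r3
      · refine ⟨(s0, s1, s2 - 1, s3 + 1), ?_, ?_, ?_⟩
        · rw [mem_F_iff]; simp only; omega
        · simp only [Sq]; omega
        · simp only [ph]
          have : ((s2 - 1 : ℕ) : ℤ) = (s2 : ℤ) - 1 := by omega
          rw [this]; push_cast; nlinarith [h23]
      · exfalso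
        simp only [Sq, Mv] at hlt
        omega

lemma down_step (h01 : a0 < a1) (h12 : a1 < a2) (h23 : a2 < a3)
    (hr0 : 0 < r0) (hr1 : 0 < r1) (hr2 : 0 < r2)
    {s : Cfg} (hs : s ∈ F r0 r1 r2 r3 h) (hlt : mv r0 r1 r2 h < Sq s) :
    ∃ s' ∈ F r0 r1 r2 r3 h, Sq s' + 1 = Sq s ∧ ph a0 a1 a2 a3 s' < ph a0 a1 a2 a3 s := by
  rw [mem_F_iff] at hs
  obtain ⟨s0, s1, s2, s3⟩ := s
  simp only at hs
  obtain ⟨h0, h1, h2, h3, hsum⟩ := hs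
  by_cases c0 : 1 ≤ s1 ∧ s0 < r0
  · refine ⟨(s0 + 1, s1 - 1, s2, s3), ?_, ?_, ?_⟩
    · rw [mem_F_iff]; simp only; omega
    · simp only [Sq]; omega
    · simp only [ph]
      have : ((s1 - 1 : ℕ) : ℤ) = (s1 : ℤ) - 1 := by omega
      rw [this]; push_cast; nlinarith [h01]
  · by_cases c1 : 1 ≤ s2 ∧ s1 < r1
    · refine ⟨(s0, s1 + 1, s2 - 1, s3), ?_, ?_, ?_⟩
      · rw [mem_F_iff]; simp only; omega
      · simp only [Sq]; omega
      · simp only [ph]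
        have : ((s2 - 1 : ℕ) : ℤ) = (s2 : ℤ) - 1 := by omega
        rw [this]; push_cast; nlinarith [h12]
    · by_cases c2 : 1 ≤ s3 ∧ s2 < r2
      · refine ⟨(s0, s1, s2 + 1, s3 - 1), ?_, ?_, ?_⟩
        · rw [mem_F_iff]; simp only; omega
        · simp only [Sq]; omega
        · simp only [ph]
          have : ((s3 - 1 : ℕ) : ℤ) = (s3 : ℤ) - 1 := by omega
          rw [this]; push_cast; nlinarith [h23]
      · exfalso
        simp only [Sq, mv] at hlt
        omega

lemma bot_mem (hh : h ≤ r0 + r1 + r2 + r3) :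
    ∃ s ∈ F r0 r1 r2 r3 h, Sq s = mv r0 r1 r2 h := by
  refine ⟨(min h r0, min (h - r0) r1, min (h - (r0+r1)) r2, h - (r0+r1+r2)), ?_, ?_⟩
  · rw [mem_F_iff]; simp only; omega
  · simp only [Sq, mv]; omega

lemma level_mem (hr1 : 0 < r1) (hr2 : 0 < r2) (hr3 : 0 < r3)
    (hh : h ≤ r0 + r1 + r2 + r3) {n : ℕ} (h1 : mv r0 r1 r2 h ≤ n) (h2 : n ≤ Mv r1 r2 r3 h) :
    ∃ s ∈ F r0 r1 r2 r3 h, Sq s = n := by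
  induction n, h1 using Nat.le_induction with
  | base => exact bot_mem hh
  | succ n hn ih =>
    obtain ⟨s, hsF, hsq⟩ := ih (by omega)
    obtain ⟨s', hs', hq, -⟩ := up_step (a0 := 0) (a1 := 1) (a2 := 2) (a3 := 3)
      (by norm_num) (by norm_num) (by norm_num) hr1 hr2 hr3 hsF (by omega)
    exact ⟨s', hs', by omega⟩

lemma mono_of_step {lo hi : ℕ} {g : ℕ → ℤ}
    (hstep : ∀ n, lo ≤ n → n < hi → g n < g (n + 1)) :
    ∀ i j, lo ≤ i → i < j → j ≤ hi → g i < g j := by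
  intro i j hi hij hj
  induction j, hij using Nat.le_induction with
  | base => exact hstep i hi (by omega)
  | succ n hn ih => exact lt_trans (ih (by omega)) (hstep n (by omega) (by omega))

lemma fill (c0 c1 c2 c3 n : ℕ) (hn : n ≤ c0 + c1 + c2 + c3) :
    ∃ t0 t1 t2 t3 : ℕ, t0 ≤ c0 ∧ t1 ≤ c1 ∧ t2 ≤ c2 ∧ t3 ≤ c3 ∧ t0 + t1 + t2 + t3 = n :=
  ⟨min c0 n, min c1 (n - c0), min c2 (n - c0 - c1), n - c0 - c1 - c2, by omega⟩

end


lemma genSumset_eq (r0 r1 r2 r3 : ℕ) (h : ℕ) (a0 a1 a2 a3 : ℤ) :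
    genSumset 4 (fun j => if j = 0 then a0 else if j = 1 then a1 else if j = 2 then a2 else a3)
      (fun j => if j = 0 then r0 else if j = 1 then r1 else if j = 2 then r2 else r3) h
      = ↑((F r0 r1 r2 r3 h).image (ph a0 a1 a2 a3)) := by
  ext z
  simp only [genSumset, Set.mem_setOf_eq, coe_image, Set.mem_image, mem_coe]
  constructor
  · rintro ⟨s, hb, hsum, rfl⟩
    refine ⟨(s 0, s 1, s 2, s 3), ?_, ?_⟩
    · rw [mem_F_iff]
      have b0 := hb 0 (by norm_num); have b1 := hb 1 (by norm_num)
      have b2 := hb 2 (by norm_num); have b3 := hb 3 (by norm_num)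
      norm_num at b0 b1 b2 b3
      rw [Finset.sum_range_succ, Finset.sum_range_succ, Finset.sum_range_succ,
        Finset.sum_range_one] at hsum
      exact ⟨b0, b1, b2, b3, hsum⟩
    · simp [ph, Finset.sum_range_succ]
  · rintro ⟨⟨s0, s1, s2, s3⟩, hmem, rfl⟩
    rw [mem_F_iff] at hmem
    simp only at hmem
    refine ⟨fun i => if i = 0 then s0 else if i = 1 then s1 else if i = 2 then s2 else s3,
      ?_, ?_, ?_⟩
    · intro i hi
      interval_cases i <;> norm_num <;> tauto
    · rw [Finset.sum_range_succ, Finset.sum_range_succ, Finset.sum_range_succ,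
        Finset.sum_range_one]
      norm_num
      omega
    · simp [ph, Finset.sum_range_succ]


set_option maxHeartbeats 1000000 in
lemma Lval_eq (h I M δ θ : ℕ) (r0 r1 r2 r3 : ℕ)
    (hh2 : 2 ≤ h) (hhk : h + 2 ≤ r0 + r1 + r2 + r3)
    (r : ℕ → ℕ)
    (hrdef : r = fun j => if j = 0 then r0 else if j = 1 then r1 else if j = 2 then r2 else r3)
    (hI1 : ∑ j ∈ Finset.range I, r j ≤ h)
    (hI2 : ∀ I' ≤ 4, (∑ j ∈ Finset.range I', r j ≤ h) → I' ≤ I)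
    (hM1 : ∑ j ∈ Finset.Ico (M + 1) 4, r j ≤ h)
    (hM2 : ∀ M', (∑ j ∈ Finset.Ico (M' + 1) 4, r j ≤ h) → M ≤ M')
    (hδ : (δ : ℤ) = (h : ℤ) - ∑ j ∈ Finset.range I, (r j : ℤ))
    (hθ : (θ : ℤ) = (h : ℤ) - ∑ j ∈ Finset.Ico (M + 1) 4, (r j : ℤ)) :
    Lval 4 I M r δ θ = (Mv r1 r2 r3 h : ℤ) - (mv r0 r1 r2 h : ℤ) + 1 := by
  subst hrdef
  have mono : ∀ i j : ℕ, i ≤ j →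
      (∑ k ∈ Finset.range i, (if k = 0 then r0 else if k = 1 then r1 else if k = 2 then r2 else r3))
        ≤ ∑ k ∈ Finset.range j, (if k = 0 then r0 else if k = 1 then r1 else if k = 2 then r2 else r3) :=
    fun i j hij => Finset.sum_le_sum_of_subset (Finset.range_subset_range.2 hij)
  have monoM : ∀ i j : ℕ, i ≤ j →
      (∑ k ∈ Finset.Ico j 4, (if k = 0 then r0 else if k = 1 then r1 else if k = 2 then r2 else r3))
        ≤ ∑ k ∈ Finset.Ico i 4, (if k = 0 then r0 else if k = 1 then r1 else if k = 2 then r2 else r3) :=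
    fun i j hij => Finset.sum_le_sum_of_subset (Finset.Ico_subset_Ico hij le_rfl)
  have e1 : (∑ k ∈ Finset.range 1, (if k = 0 then r0 else if k = 1 then r1 else if k = 2 then r2 else r3)) = r0 := by
    simp
  have e2 : (∑ k ∈ Finset.range 2, (if k = 0 then r0 else if k = 1 then r1 else if k = 2 then r2 else r3)) = r0 + r1 := by
    simp [Finset.sum_range_succ]
  have e3 : (∑ k ∈ Finset.range 3, (if k = 0 then r0 else if k = 1 then r1 else if k = 2 then r2 else r3)) = r0 + r1 + r2 := by
    simp [Finset.sum_range_succ]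
  have e4 : (∑ k ∈ Finset.range 4, (if k = 0 then r0 else if k = 1 then r1 else if k = 2 then r2 else r3)) = r0 + r1 + r2 + r3 := by
    simp [Finset.sum_range_succ]
  have f3 : (∑ k ∈ Finset.Ico 4 4, (if k = 0 then r0 else if k = 1 then r1 else if k = 2 then r2 else r3)) = 0 := by
    simp
  have f2 : (∑ k ∈ Finset.Ico 3 4, (if k = 0 then r0 else if k = 1 then r1 else if k = 2 then r2 else r3)) = r3 := by
    rw [show Finset.Ico 3 4 = {3} from rfl]; simp
  have f1 : (∑ k ∈ Finset.Ico 2 4, (if k = 0 then r0 else if k = 1 then r1 else if k = 2 then r2 else r3)) = r2 + r3 := by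
    rw [show Finset.Ico 2 4 = {2,3} from rfl]; simp
  have f0 : (∑ k ∈ Finset.Ico 1 4, (if k = 0 then r0 else if k = 1 then r1 else if k = 2 then r2 else r3)) = r1 + r2 + r3 := by
    rw [show Finset.Ico 1 4 = {1,2,3} from rfl]; simp [Finset.sum_insert]; ring
  have hI3 : I ≤ 3 := by
    by_contra hc
    have h4 : 4 ≤ I := by omega
    have := le_trans (mono 4 I h4) hI1
    omega
  have cI1 : 1 ≤ I ↔ r0 ≤ h :=
    ⟨fun h1 => e1 ▸ le_trans (mono 1 I h1) hI1, fun h1 => hI2 1 (by norm_num) (by rw [e1]; exact h1)⟩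
  have cI2 : 2 ≤ I ↔ r0 + r1 ≤ h :=
    ⟨fun h1 => e2 ▸ le_trans (mono 2 I h1) hI1, fun h1 => hI2 2 (by norm_num) (by rw [e2]; exact h1)⟩
  have cI3 : 3 ≤ I ↔ r0 + r1 + r2 ≤ h :=
    ⟨fun h1 => e3 ▸ le_trans (mono 3 I h1) hI1, fun h1 => hI2 3 (by norm_num) (by rw [e3]; exact h1)⟩
  have hM3 : M ≤ 3 := hM2 3 (by rw [f3]; omega)
  have cM1 : M ≤ 2 ↔ r3 ≤ h :=
    ⟨fun h1 => f2 ▸ le_trans (monoM (M+1) 3 (by omega)) hM1, fun h1 => hM2 2 (by rw [f2]; exact h1)⟩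
  have cM2 : M ≤ 1 ↔ r2 + r3 ≤ h :=
    ⟨fun h1 => f1 ▸ le_trans (monoM (M+1) 2 (by omega)) hM1, fun h1 => hM2 1 (by rw [f1]; exact h1)⟩
  have cM3 : M ≤ 0 ↔ r1 + r2 + r3 ≤ h :=
    ⟨fun h1 => f0 ▸ le_trans (monoM (M+1) 1 (by omega)) hM1, fun h1 => hM2 0 (by rw [f0]; exact h1)⟩
  have hmEq : (mv r0 r1 r2 h : ℤ)
      = (∑ j ∈ Finset.range I, (j : ℤ) * ((if j = 0 then r0 else if j = 1 then r1 else if j = 2 then r2 else r3 : ℕ) : ℤ)) + I * δ := by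
    interval_cases I <;>
      simp only [Finset.sum_range_succ, Finset.sum_range_zero, Finset.sum_range_one] at hδ ⊢ <;>
      norm_num at hδ ⊢ <;> simp only [mv] <;> omega
  have hMEq : (Mv r1 r2 r3 h : ℤ)
      = (∑ j ∈ Finset.Ico (M + 1) 4, (j : ℤ) * ((if j = 0 then r0 else if j = 1 then r1 else if j = 2 then r2 else r3 : ℕ) : ℤ)) + M * θ := by
    interval_cases M <;>
      [rw [show Finset.Ico 1 4 = {1,2,3} from rfl] at hθ ⊢;
       rw [show Finset.Ico 2 4 = {2,3} from rfl] at hθ ⊢;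
       rw [show Finset.Ico 3 4 = {3} from rfl] at hθ ⊢;
       rw [show Finset.Ico 4 4 = (∅ : Finset ℕ) from rfl] at hθ ⊢] <;>
      norm_num at hθ ⊢ <;> simp only [Mv] <;> omega
  simp only [Lval]
  linear_combination hmEq - hMEq


end FourAP

set_option maxHeartbeats 1000000 in
theorem four_elt_eq_iff_AP (h I M δ θ : ℕ) (a₀ a₁ a₂ a₃ : ℤ) (r₀ r₁ r₂ r₃ : ℕ)
    (ha01 : a₀ < a₁) (ha12 : a₁ < a₂) (ha23 : a₂ < a₃)
    (hr0 : 0 < r₀) (hr1 : 0 < r₁) (hr2 : 0 < r₂) (hr3 : 0 < r₃)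
    (hr12 : 2 ≤ r₁ ∨ 2 ≤ r₂)
    (hh2 : 2 ≤ h) (hhk : h + 2 ≤ r₀ + r₁ + r₂ + r₃)
    (r : ℕ → ℕ)
    (hrdef : r = fun j => if j = 0 then r₀ else if j = 1 then r₁ else if j = 2 then r₂ else r₃)
    (a : ℕ → ℤ)
    (hadef : a = fun j => if j = 0 then a₀ else if j = 1 then a₁ else if j = 2 then a₂ else a₃)
    (hIk : I ≤ 4)
    (hI1 : ∑ j ∈ Finset.range I, r j ≤ h)
    (hI2 : ∀ I' ≤ 4, (∑ j ∈ Finset.range I', r j ≤ h) → I' ≤ I)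
    (hM1 : ∑ j ∈ Finset.Ico (M + 1) 4, r j ≤ h)
    (hM2 : ∀ M', (∑ j ∈ Finset.Ico (M' + 1) 4, r j ≤ h) → M ≤ M')
    (hδ : (δ : ℤ) = (h : ℤ) - ∑ j ∈ Finset.range I, (r j : ℤ))
    (hθ : (θ : ℤ) = (h : ℤ) - ∑ j ∈ Finset.Ico (M + 1) 4, (r j : ℤ)) :
    ((genSumset 4 a r h).ncard : ℤ) = Lval 4 I M r δ θ ↔
      (a₁ - a₀ = a₂ - a₁ ∧ a₂ - a₁ = a₃ - a₂) := by
  have hLv : Lval 4 I M r δ θ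
      = (FourAP.Mv r₁ r₂ r₃ h : ℤ) - (FourAP.mv r₀ r₁ r₂ h : ℤ) + 1 :=
    FourAP.Lval_eq h I M δ θ r₀ r₁ r₂ r₃ hh2 hhk r hrdef hI1 hI2 hM1 hM2 hδ hθ
  subst hrdef; subst hadef
  classical
  have hGS := FourAP.genSumset_eq r₀ r₁ r₂ r₃ h a₀ a₁ a₂ a₃
  set G : Finset ℤ := (FourAP.F r₀ r₁ r₂ r₃ h).image (FourAP.ph a₀ a₁ a₂ a₃) with hGdef
  rw [hGS, Set.ncard_coe_finset, hLv]
  set mv := FourAP.mv r₀ r₁ r₂ h with hmvdef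
  set Mv := FourAP.Mv r₁ r₂ r₃ h with hMvdef
  have hh4 : h ≤ r₀ + r₁ + r₂ + r₃ := by omega
  have hmle : mv ≤ Mv := by
    obtain ⟨s, hs, hq⟩ := FourAP.bot_mem (r0 := r₀) (r1 := r₁) (r2 := r₂) (r3 := r₃) (h := h) hh4
    have := FourAP.S_bounds hs
    omega
  constructor
  · -- equality implies AP
    intro heq
    have hcard : G.card = Mv + 1 - mv := by omega
    have exmin : ∀ n : ℕ, ∃ x : FourAP.Cfg, mv ≤ n → n ≤ Mv →
        x ∈ FourAP.F r₀ r₁ r₂ r₃ h ∧ FourAP.Sq x = n ∧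
          ∀ y ∈ FourAP.F r₀ r₁ r₂ r₃ h, FourAP.Sq y = n →
            FourAP.ph a₀ a₁ a₂ a₃ x ≤ FourAP.ph a₀ a₁ a₂ a₃ y := by
      intro n
      by_cases hn : mv ≤ n ∧ n ≤ Mv
      · obtain ⟨s, hsF, hsq⟩ := FourAP.level_mem hr1 hr2 hr3 hh4 hn.1 hn.2
        obtain ⟨b, hb, hbmin⟩ := Finset.exists_min_image
          ((FourAP.F r₀ r₁ r₂ r₃ h).filter fun y => FourAP.Sq y = n)
          (FourAP.ph a₀ a₁ a₂ a₃) ⟨s, Finset.mem_filter.2 ⟨hsF, hsq⟩⟩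
        rw [Finset.mem_filter] at hb
        exact ⟨b, fun _ _ => ⟨hb.1, hb.2,
          fun y hy hyq => hbmin y (Finset.mem_filter.2 ⟨hy, hyq⟩)⟩⟩
      · exact ⟨(0, 0, 0, 0), fun h1 h2 => absurd ⟨h1, h2⟩ hn⟩
    have exmax : ∀ n : ℕ, ∃ x : FourAP.Cfg, mv ≤ n → n ≤ Mv →
        x ∈ FourAP.F r₀ r₁ r₂ r₃ h ∧ FourAP.Sq x = n ∧
          ∀ y ∈ FourAP.F r₀ r₁ r₂ r₃ h, FourAP.Sq y = n →
            FourAP.ph a₀ a₁ a₂ a₃ y ≤ FourAP.ph a₀ a₁ a₂ a₃ x := by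
      intro n
      by_cases hn : mv ≤ n ∧ n ≤ Mv
      · obtain ⟨s, hsF, hsq⟩ := FourAP.level_mem hr1 hr2 hr3 hh4 hn.1 hn.2
        obtain ⟨b, hb, hbmax⟩ := Finset.exists_max_image
          ((FourAP.F r₀ r₁ r₂ r₃ h).filter fun y => FourAP.Sq y = n)
          (FourAP.ph a₀ a₁ a₂ a₃) ⟨s, Finset.mem_filter.2 ⟨hsF, hsq⟩⟩
        rw [Finset.mem_filter] at hb
        exact ⟨b, fun _ _ => ⟨hb.1, hb.2,
          fun y hy hyq => hbmax y (Finset.mem_filter.2 ⟨hy, hyq⟩)⟩⟩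
      · exact ⟨(0, 0, 0, 0), fun h1 h2 => absurd ⟨h1, h2⟩ hn⟩
    choose pmin hpmin using exmin
    choose pmax hpmax using exmax
    have stepmin : ∀ n, mv ≤ n → n < Mv →
        FourAP.ph a₀ a₁ a₂ a₃ (pmin n) < FourAP.ph a₀ a₁ a₂ a₃ (pmin (n + 1)) := by
      intro n h1 h2
      obtain ⟨hF', hq', -⟩ := hpmin (n + 1) (by omega) (by omega)
      obtain ⟨y, hyF, hy1, hylt⟩ := FourAP.down_step ha01 ha12 ha23 hr0 hr1 hr2 hF'
        (by rw [hq']; omega)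
      have h3 := (hpmin n h1 (by omega)).2.2 y hyF (by omega)
      linarith
    have stepmax : ∀ n, mv ≤ n → n < Mv →
        FourAP.ph a₀ a₁ a₂ a₃ (pmax n) < FourAP.ph a₀ a₁ a₂ a₃ (pmax (n + 1)) := by
      intro n h1 h2
      obtain ⟨hF', hq', -⟩ := hpmax n h1 (by omega)
      obtain ⟨y, hyF, hy1, hylt⟩ := FourAP.up_step ha01 ha12 ha23 hr1 hr2 hr3 hF'
        (by rw [hq']; omega)
      have h3 := (hpmax (n + 1) (by omega) h2).2.2 y hyF (by omega)
      linarith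
    have monoMin := FourAP.mono_of_step (lo := mv) (hi := Mv) stepmin
    have monoMax := FourAP.mono_of_step (lo := mv) (hi := Mv) stepmax
    have hfmem : ∀ i : Fin G.card, FourAP.ph a₀ a₁ a₂ a₃ (pmin (mv + i)) ∈ G := by
      intro i
      have hi := i.isLt
      exact Finset.mem_image.2 ⟨pmin (mv + i), (hpmin (mv + i) (by omega) (by omega)).1, rfl⟩
    have hgmem : ∀ i : Fin G.card, FourAP.ph a₀ a₁ a₂ a₃ (pmax (mv + i)) ∈ G := by
      intro i
      have hi := i.isLt
      exact Finset.mem_image.2 ⟨pmax (mv + i), (hpmax (mv + i) (by omega) (by omega)).1, rfl⟩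
    have hfs : StrictMono (fun i : Fin G.card => FourAP.ph a₀ a₁ a₂ a₃ (pmin (mv + i))) := by
      intro i j hij
      have hij' : (i : ℕ) < (j : ℕ) := hij
      have hj := j.isLt
      exact monoMin (mv + i) (mv + j) (by omega) (by omega) (by omega)
    have hgs : StrictMono (fun i : Fin G.card => FourAP.ph a₀ a₁ a₂ a₃ (pmax (mv + i))) := by
      intro i j hij
      have hij' : (i : ℕ) < (j : ℕ) := hij
      have hj := j.isLt
      exact monoMax (mv + i) (mv + j) (by omega) (by omega) (by omega)
    have hfeq := Finset.orderEmbOfFin_unique (rfl : G.card = G.card) hfmem hfs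
    have hgeq := Finset.orderEmbOfFin_unique (rfl : G.card = G.card) hgmem hgs
    have hrig : ∀ u ∈ FourAP.F r₀ r₁ r₂ r₃ h, ∀ v ∈ FourAP.F r₀ r₁ r₂ r₃ h,
        FourAP.Sq u = FourAP.Sq v →
          FourAP.ph a₀ a₁ a₂ a₃ u = FourAP.ph a₀ a₁ a₂ a₃ v := by
      intro u hu v hv huv
      obtain ⟨hu1, hu2⟩ := FourAP.S_bounds hu
      set n := FourAP.Sq u with hn
      have hidx : n - mv < G.card := by omega
      have h5 : (fun i : Fin G.card => FourAP.ph a₀ a₁ a₂ a₃ (pmin (mv + i))) ⟨n - mv, hidx⟩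
          = (fun i : Fin G.card => FourAP.ph a₀ a₁ a₂ a₃ (pmax (mv + i))) ⟨n - mv, hidx⟩ := by
        rw [hfeq, hgeq]
      simp only at h5
      rw [show mv + (n - mv) = n by omega] at h5
      have p1 := (hpmin n (by omega) (by omega)).2.2 u hu rfl
      have p2 := (hpmax n (by omega) (by omega)).2.2 u hu rfl
      have p3 := (hpmin n (by omega) (by omega)).2.2 v hv huv.symm
      have p4 := (hpmax n (by omega) (by omega)).2.2 v hv huv.symm
      linarith
    have hE02 : a₁ - a₀ = a₃ - a₂ := by
      obtain ⟨t0, t1, t2, t3, b0, b1, b2, b3, hsumt⟩ :=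
        FourAP.fill (r₀ - 1) (r₁ - 1) (r₂ - 1) (r₃ - 1) (h - 2) (by omega)
      have hu : (t0, 1 + t1, 1 + t2, t3) ∈ FourAP.F r₀ r₁ r₂ r₃ h := by
        rw [FourAP.mem_F_iff]; simp only; omega
      have hv : (1 + t0, t1, t2, 1 + t3) ∈ FourAP.F r₀ r₁ r₂ r₃ h := by
        rw [FourAP.mem_F_iff]; simp only; omega
      have := hrig _ hu _ hv (by simp only [FourAP.Sq]; omega)
      simp only [FourAP.ph] at this
      push_cast at this
      linarith
    rcases hr12 with hr₁2 | hr₂2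
    · have hE01 : a₁ - a₀ = a₂ - a₁ := by
        obtain ⟨t0, t1, t2, t3, b0, b1, b2, b3, hsumt⟩ :=
          FourAP.fill (r₀ - 1) (r₁ - 2) (r₂ - 1) r₃ (h - 2) (by omega)
        have hu : (t0, 2 + t1, t2, t3) ∈ FourAP.F r₀ r₁ r₂ r₃ h := by
          rw [FourAP.mem_F_iff]; simp only; omega
        have hv : (1 + t0, t1, 1 + t2, t3) ∈ FourAP.F r₀ r₁ r₂ r₃ h := by
          rw [FourAP.mem_F_iff]; simp only; omega
        have := hrig _ hu _ hv (by simp only [FourAP.Sq]; omega)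
        simp only [FourAP.ph] at this
        push_cast at this
        linarith
      exact ⟨hE01, by linarith⟩
    · have hE12 : a₂ - a₁ = a₃ - a₂ := by
        obtain ⟨t0, t1, t2, t3, b0, b1, b2, b3, hsumt⟩ :=
          FourAP.fill r₀ (r₁ - 1) (r₂ - 2) (r₃ - 1) (h - 2) (by omega)
        have hu : (t0, t1, 2 + t2, t3) ∈ FourAP.F r₀ r₁ r₂ r₃ h := by
          rw [FourAP.mem_F_iff]; simp only; omega
        have hv : (t0, 1 + t1, t2, 1 + t3) ∈ FourAP.F r₀ r₁ r₂ r₃ h := by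
          rw [FourAP.mem_F_iff]; simp only; omega
        have := hrig _ hu _ hv (by simp only [FourAP.Sq]; omega)
        simp only [FourAP.ph] at this
        push_cast at this
        linarith
      exact ⟨by linarith, hE12⟩
  · -- AP implies equality
    rintro ⟨hap1, hap2⟩
    have ha2 : a₂ = 2 * a₁ - a₀ := by linarith
    have ha3 : a₃ = 3 * a₁ - 2 * a₀ := by linarith
    have hphS : ∀ s ∈ FourAP.F r₀ r₁ r₂ r₃ h, FourAP.ph a₀ a₁ a₂ a₃ s
        = (h : ℤ) * a₀ + (a₁ - a₀) * (FourAP.Sq s : ℤ) := by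
      intro s hs
      rw [FourAP.mem_F_iff] at hs
      obtain ⟨s0, s1, s2, s3⟩ := s
      simp only at hs
      obtain ⟨-, -, -, -, hsum⟩ := hs
      have hsz : (s0 : ℤ) + s1 + s2 + s3 = (h : ℤ) := by exact_mod_cast hsum
      simp only [FourAP.ph, FourAP.Sq]
      push_cast
      rw [ha2, ha3]
      linear_combination a₀ * hsz
    have himg : G = (FourAP.F r₀ r₁ r₂ r₃ h).image
        (fun s => (h : ℤ) * a₀ + (a₁ - a₀) * (FourAP.Sq s : ℤ)) :=
      Finset.image_congr (fun s hs => hphS s hs)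
    have himg2 : G = ((FourAP.F r₀ r₁ r₂ r₃ h).image FourAP.Sq).image
        (fun n : ℕ => (h : ℤ) * a₀ + (a₁ - a₀) * (n : ℤ)) := by
      rw [himg, Finset.image_image]
      rfl
    have hSimg : (FourAP.F r₀ r₁ r₂ r₃ h).image FourAP.Sq = Finset.Icc mv Mv := by
      ext n
      simp only [Finset.mem_image, Finset.mem_Icc]
      constructor
      · rintro ⟨s, hs, rfl⟩
        exact FourAP.S_bounds hs
      · rintro ⟨h1, h2⟩
        obtain ⟨s, hs, hq⟩ := FourAP.level_mem hr1 hr2 hr3 hh4 h1 h2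
        exact ⟨s, hs, hq⟩
    have hinj : Function.Injective (fun n : ℕ => (h : ℤ) * a₀ + (a₁ - a₀) * (n : ℤ)) := by
      intro x y hxy
      simp only at hxy
      have hd : (0 : ℤ) < a₁ - a₀ := by linarith
      have hxy2 : (a₁ - a₀) * (x : ℤ) = (a₁ - a₀) * (y : ℤ) := by linarith
      have := mul_left_cancel₀ (ne_of_gt hd) hxy2
      exact_mod_cast this
    rw [himg2, hSimg, Finset.card_image_of_injective _ hinj, Nat.card_Icc]
    omega
end

section
/- With r = (r, r, ..., r) a constant k-tuple and m the integer with h/r − 1 < m ≤ h/r (where 1 ≤ r and r ≤ h ≤ rk), one has L((r,...,r), h) = m·r·(k−m) + (h − m·r)·(k − 2m − 1) + 1. -/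
open Finset

lemma sum_range_id_two' (n : ℕ) : (∑ j ∈ Finset.range n, (j:ℤ)) * 2 = n * (n - 1) := by
  induction n with
  | zero => simp
  | succ n ih =>
    rw [Finset.sum_range_succ, add_mul, ih]
    push_cast
    ring

theorem Lval_uniform_formula (k r h m I M δ θ : ℕ)
    (hr : 1 ≤ r) (hrh : r ≤ h) (hhk : h ≤ r * k)
    (hm1 : m * r ≤ h) (hm2 : h < m * r + r)
    (hIk : I ≤ k)
    (hI1 : ∑ j ∈ Finset.range I, (fun _ => r) j ≤ h)
    (hI2 : ∀ I' ≤ k, (∑ j ∈ Finset.range I', (fun _ => r) j ≤ h) → I' ≤ I)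
    (hM1 : ∑ j ∈ Finset.Ico (M + 1) k, (fun _ => r) j ≤ h)
    (hM2 : ∀ M', (∑ j ∈ Finset.Ico (M' + 1) k, (fun _ => r) j ≤ h) → M ≤ M')
    (hδ : (δ : ℤ) = (h : ℤ) - ∑ j ∈ Finset.range I, ((fun _ => r) j : ℤ))
    (hθ : (θ : ℤ) = (h : ℤ) - ∑ j ∈ Finset.Ico (M + 1) k, ((fun _ => r) j : ℤ)) :
    Lval k I M (fun _ => r) δ θ
      = (m : ℤ) * r * ((k : ℤ) - m) + ((h : ℤ) - (m : ℤ) * r) * ((k : ℤ) - 2 * m - 1) + 1 := by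
  have hr0 : 0 < r := hr
  have hsumI : ∀ n : ℕ, (∑ j ∈ Finset.range n, (fun _ => r) j) = n * r := by
    intro n; simp [Finset.sum_const, Finset.card_range, smul_eq_mul]
  have hsumM : ∀ a : ℕ, (∑ j ∈ Finset.Ico a k, (fun _ => r) j) = (k - a) * r := by
    intro a; simp [Finset.sum_const, Nat.card_Ico, smul_eq_mul]
  have hmk : m ≤ k := by
    have h1 : m * r ≤ k * r := hm1.trans (by rw [mul_comm] at hhk; exact hhk)
    exact Nat.le_of_mul_le_mul_right h1 hr0
  have hIm : I = m := by
    have h1 : m ≤ I := hI2 m hmk (by rw [hsumI]; exact hm1)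
    have h2 : I * r ≤ h := by rw [← hsumI I]; exact hI1
    nlinarith
  have hm0 : 1 ≤ m := by nlinarith
  have hM1' : (k - (M + 1)) * r ≤ h := by rw [← hsumM]; exact hM1
  have hkM : k ≤ M + 1 + m := by
    by_contra hc
    push_neg at hc
    have h5 : m + 1 ≤ k - (M + 1) := by omega
    have h6 := Nat.mul_le_mul_right r h5
    nlinarith
  have hMle : M ≤ k - m - 1 := by
    apply hM2
    rw [hsumM]
    have h7 : k - (k - m - 1 + 1) ≤ m := by omega
    calc (k - (k - m - 1 + 1)) * r ≤ m * r := Nat.mul_le_mul_right r h7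
      _ ≤ h := hm1
  have hδz : (δ : ℤ) = (h : ℤ) - (m : ℤ) * r := by
    rw [hδ, hIm]
    simp [Finset.sum_const, Finset.card_range]
  have hM1k : M + 1 ≤ k := by omega
  have hIcoS : (∑ j ∈ Finset.Ico (M + 1) k, (j : ℤ) * r)
      = (∑ j ∈ Finset.range k, (j:ℤ)) * r - (∑ j ∈ Finset.range (M+1), (j:ℤ)) * r := by
    have hsplit : (∑ j ∈ Finset.range (M+1), (j:ℤ) * r) + (∑ j ∈ Finset.Ico (M + 1) k, (j : ℤ) * r)
        = ∑ j ∈ Finset.range k, (j:ℤ) * r := by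
      simp only [Finset.range_eq_Ico]
      exact Finset.sum_Ico_consecutive _ (Nat.zero_le _) hM1k
    rw [Finset.sum_mul, Finset.sum_mul]
    linarith [hsplit]
  have e1 := sum_range_id_two' k
  have e3 := sum_range_id_two' m
  have e4 : (∑ j ∈ Finset.range m, (j:ℤ) * r) = (∑ j ∈ Finset.range m, (j:ℤ)) * r :=
    (Finset.sum_mul _ _ _).symm
  rcases eq_or_lt_of_le hmk with heq | hlt
  · -- m = k
    subst heq
    have hM0 : M = 0 := by omega
    subst hM0
    have h9 : h = m * r := le_antisymm (by rw [mul_comm] at hhk; exact hhk) hm1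
    have hhz : (h : ℤ) = (m : ℤ) * r := by exact_mod_cast congrArg (Nat.cast : ℕ → ℤ) h9
    unfold Lval
    rw [hIcoS, hIm, hδz]
    simp only [Finset.sum_range_one, Nat.cast_zero]
    linear_combination hhz - e4
  · -- m < k
    have hMn : (M : ℤ) = (k : ℤ) - m - 1 := by
      have h10 : M = k - m - 1 := by omega
      rw [h10]
      push_cast [Nat.cast_sub (by omega : m + 1 ≤ k)]
      omega
    have hkm1 : M + 1 = k - m := by omega
    have hθz : (θ : ℤ) = (h : ℤ) - (m:ℤ) * r := by
      rw [hθ]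
      have h11 : (∑ j ∈ Finset.Ico (M+1) k, (((fun _ => r) j : ℕ) : ℤ)) = ((k - (M+1) : ℕ) : ℤ) * r := by
        simp [Finset.sum_const, Nat.card_Ico]
      rw [h11, show k - (M+1) = m by omega]
    have e2 := sum_range_id_two' (k - m)
    rw [Nat.cast_sub hmk] at e2
    unfold Lval
    rw [hIcoS, hkm1, hIm, hδz, hθz, hMn]
    refine mul_left_cancel₀ (two_ne_zero) ?_
    linear_combination (r:ℤ) * e1 - (r:ℤ) * e2 - (r:ℤ) * e3 - 2 * e4
end
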